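/- For every x ∈ (0, 1/2), the series ∑_{k≥1} C(2k,k) x^{2k−1}/(2k−1) converges to (4x² + √(1−4x²) − 1)/(x√(1−4x²)). -/

import Mathlib

open Real

private lemma catalan_partial_sum (N : ℕ) :
    ∑ n ∈ Finset.range N, (catalan n : ℝ) / 4 ^ n
      = 2 - 2 * (Nat.centralBinom N : ℝ) / 4 ^ N := by
  induction N with
  | zero => simp [Nat.centralBinom_zero]
  | succ N ih =>
    rw [Finset.sum_range_succ, ih]
    have hrec : ((N : ℝ) + 1) * (Nat.centralBinom (N + 1) : ℝ)
        = 2 * (2 * N + 1) * Nat.centralBinom N := by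
      exact_mod_cast Nat.succ_mul_centralBinom_succ N
    have hcat : ((N : ℝ) + 1) * (catalan N : ℝ) = Nat.centralBinom N := by
      exact_mod_cast succ_mul_catalan_eq_centralBinom N
    have hN : ((N : ℝ) + 1) ≠ 0 := by positivity
    have hkey : 4 * (catalan N : ℝ) = 8 * Nat.centralBinom N - 2 * Nat.centralBinom (N + 1) := by
      apply mul_left_cancel₀ hN
      linear_combination 4 * hcat + 2 * hrec
    have h4 : ((4 : ℝ) ^ N) ≠ 0 := by positivity
    have h4' : (4 : ℝ) ^ (N + 1) = 4 ^ N * 4 := pow_succ 4 N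
    rw [h4']
    field_simp
    linear_combination hkey

private lemma catalan_hasSum {y : ℝ} (h0 : 0 < y) (h4 : y < 1 / 4) :
    HasSum (fun n => (catalan n : ℝ) * y ^ n)
      ((1 - Real.sqrt (1 - 4 * y)) / (2 * y)) := by
  set f : ℕ → ℝ := fun n => (catalan n : ℝ) * y ^ n with hf
  have hfnn : ∀ n, 0 ≤ f n := fun n => by positivity
  have hfle : ∀ n, f n ≤ (catalan n : ℝ) / 4 ^ n := by
    intro n
    have h1 : y ^ n ≤ (1 / 4) ^ n := pow_le_pow_left₀ h0.le h4.le n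
    calc f n ≤ (catalan n : ℝ) * (1 / 4) ^ n :=
          mul_le_mul_of_nonneg_left h1 (by positivity)
      _ = (catalan n : ℝ) / 4 ^ n := by
          rw [div_pow, one_pow]; ring
  have hgsum : ∀ N, ∑ n ∈ Finset.range N, (catalan n : ℝ) / 4 ^ n ≤ 2 := by
    intro N
    rw [catalan_partial_sum]
    have : 0 ≤ 2 * (Nat.centralBinom N : ℝ) / 4 ^ N := by positivity
    linarith
  have hgS : Summable fun n => (catalan n : ℝ) / 4 ^ n :=
    summable_of_sum_range_le (fun n => by positivity) hgsum
  have hS : Summable f := Summable.of_nonneg_of_le hfnn hfle hgS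
  set L := ∑' n, f n with hL
  have hLlt : L < 2 := by
    have h1 : f 1 < (catalan 1 : ℝ) / 4 ^ 1 := by
      simp only [hf, catalan_one, Nat.cast_one, one_mul, pow_one]
      linarith
    have h2 := Summable.tsum_lt_tsum (f := f) (g := fun n => (catalan n : ℝ) / 4 ^ n) hfle h1 hS hgS
    have h3 : ∑' n, (catalan n : ℝ) / 4 ^ n ≤ 2 :=
      Summable.tsum_le_of_sum_range_le hgS hgsum
    calc L < ∑' n, (catalan n : ℝ) / 4 ^ n := h2
      _ ≤ 2 := h3
  -- Cauchy product / functional equation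
  have hnorm : Summable fun n => ‖f n‖ := by
    refine hS.congr fun n => ?_
    rw [Real.norm_eq_abs, abs_of_nonneg (hfnn n)]
  have hcauchy : L * L = ∑' n, ∑ k ∈ Finset.range (n + 1), f k * f (n - k) :=
    tsum_mul_tsum_eq_tsum_sum_range_of_summable_norm hnorm hnorm
  have hsqr : ∀ n : ℕ, ∑ k ∈ Finset.range (n + 1), f k * f (n - k)
      = (catalan (n + 1) : ℝ) * y ^ n := by
    intro n
    have hcat : (catalan (n + 1) : ℕ)
        = ∑ k ∈ Finset.range (n + 1), catalan k * catalan (n - k) := by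
      rw [catalan_succ', Finset.Nat.sum_antidiagonal_eq_sum_range_succ
        (fun x y => catalan x * catalan y)]
    have step : ∀ k ∈ Finset.range (n + 1),
        f k * f (n - k) = (catalan k : ℝ) * catalan (n - k) * y ^ n := by
      intro k hk
      have hkn : k ≤ n := Nat.lt_succ_iff.mp (Finset.mem_range.mp hk)
      have : y ^ k * y ^ (n - k) = y ^ n := by
        rw [← pow_add, Nat.add_sub_cancel' hkn]
      simp only [hf]
      rw [mul_mul_mul_comm, this]
    rw [Finset.sum_congr rfl step, ← Finset.sum_mul, hcat]
    push_cast
    ring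
  have hfun : L = 1 + y * (L * L) := by
    have h1 : L = f 0 + ∑' n, f (n + 1) := Summable.tsum_eq_zero_add hS
    have h0' : f 0 = 1 := by simp [hf]
    have h2 : ∀ n : ℕ, f (n + 1) = y * ((catalan (n + 1) : ℝ) * y ^ n) := by
      intro n; simp only [hf]; ring
    have h3 : ∑' n, f (n + 1) = y * (L * L) := by
      rw [tsum_congr h2, tsum_mul_left, ← tsum_congr hsqr, ← hcauchy]
    rw [h0', h3] at h1
    exact h1
  have heq : y * (L * L) = L - 1 := by linarith
  have hu : 0 < 1 - 4 * y := by linarith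
  have hpos : 0 < 1 - 2 * y * L := by nlinarith
  have hsq2 : (1 - 2 * y * L) ^ 2 = 1 - 4 * y := by linear_combination 4 * y * heq
  have hsqrt : Real.sqrt (1 - 4 * y) = 1 - 2 * y * L := by
    rw [← hsq2, Real.sqrt_sq hpos.le]
  have hval : (1 - Real.sqrt (1 - 4 * y)) / (2 * y) = L := by
    rw [hsqrt]
    field_simp
    ring
  rw [hval]
  exact hS.hasSum

theorem central_binomial_series_one (x : ℝ) (hx : x ∈ Set.Ioo (0 : ℝ) (1/2)) :
    HasSum (fun k : ℕ =>
        (Nat.choose (2 * (k + 1)) (k + 1) : ℝ) * x ^ (2 * (k + 1) - 1)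
          / ((2 * (k + 1) : ℝ) - 1))
      ((4 * x ^ 2 + Real.sqrt (1 - 4 * x ^ 2) - 1)
        / (x * Real.sqrt (1 - 4 * x ^ 2))) := by
  obtain ⟨hx0, hx12⟩ := hx
  have h0 : 0 < x ^ 2 := by positivity
  have h4 : x ^ 2 < 1 / 4 := by nlinarith
  have hu : 0 < 1 - 4 * x ^ 2 := by linarith
  have hsu : 0 < Real.sqrt (1 - 4 * x ^ 2) := Real.sqrt_pos.mpr hu
  have hsq : Real.sqrt (1 - 4 * x ^ 2) * Real.sqrt (1 - 4 * x ^ 2) = 1 - 4 * x ^ 2 :=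
    Real.mul_self_sqrt hu.le
  have key := (catalan_hasSum h0 h4).mul_left (2 * x)
  have hterm : ∀ k : ℕ,
      (Nat.choose (2 * (k + 1)) (k + 1) : ℝ) * x ^ (2 * (k + 1) - 1)
          / ((2 * (k + 1) : ℝ) - 1)
        = 2 * x * ((catalan k : ℝ) * (x ^ 2) ^ k) := by
    intro k
    have hB : (Nat.choose (2 * (k + 1)) (k + 1) : ℝ) = Nat.centralBinom (k + 1) := by
      rw [Nat.centralBinom]
    have hrec : ((k : ℝ) + 1) * (Nat.centralBinom (k + 1) : ℝ)
        = 2 * (2 * k + 1) * Nat.centralBinom k := by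
      exact_mod_cast Nat.succ_mul_centralBinom_succ k
    have hcat : ((k : ℝ) + 1) * (catalan k : ℝ) = Nat.centralBinom k := by
      exact_mod_cast succ_mul_catalan_eq_centralBinom k
    have hBval : (Nat.centralBinom (k + 1) : ℝ) = 2 * (2 * k + 1) * catalan k := by
      have hk : ((k : ℝ) + 1) ≠ 0 := by positivity
      apply mul_left_cancel₀ hk
      linear_combination hrec - 2 * (2 * (k : ℝ) + 1) * hcat
    have hexp : 2 * (k + 1) - 1 = 2 * k + 1 := by omega
    have hxe : x ^ (2 * (k + 1) - 1) = x ^ (2 * k) * x := by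
      rw [hexp, pow_succ]
    have h2k : ((2 * (k + 1) : ℝ) - 1) = 2 * k + 1 := by ring
    have hne : (2 * (k : ℝ) + 1) ≠ 0 := by positivity
    rw [hB, hBval, hxe, h2k, ← pow_mul]
    field_simp
  have hvalue : (4 * x ^ 2 + Real.sqrt (1 - 4 * x ^ 2) - 1)
        / (x * Real.sqrt (1 - 4 * x ^ 2))
      = 2 * x * ((1 - Real.sqrt (1 - 4 * (x ^ 2))) / (2 * x ^ 2)) := by
    have e1 : 2 * x * ((1 - Real.sqrt (1 - 4 * (x ^ 2))) / (2 * x ^ 2))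
        = (1 - Real.sqrt (1 - 4 * x ^ 2)) / x := by
      rw [show (1 : ℝ) - 4 * (x ^ 2) = 1 - 4 * x ^ 2 by ring]
      field_simp
    rw [e1, div_eq_div_iff (by positivity) (ne_of_gt hx0)]
    linear_combination x * hsq
  rw [hvalue]
  exact key.congr_fun hterm
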